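/- (Key determinant computation in Proposition 2.) Suppose β̂ > β > 0, c_P > 0, c_V > 0, and let z = (x_C, x_S, x_R) ∈ ℝ³ satisfy x_S > 0, x_R ≥ 0 and 0 < 1 − x_S − x_R. Then for every u_P > 0, the three vectors g_V(z), g_P(z), and u_P · [g_P, g_V](z) are linearly independent in ℝ³; equivalently, the determinant of the 3 × 3 matrix with these columns is nonzero. -/

import Mathlib

noncomputable section

/-- Drift vector field of the Mayer-form SIRI dynamics, `z = (x_C, x_S, x_R)`. -/
def fVec (cP cI γ : ℝ) (z : ℝ × ℝ × ℝ) : ℝ × ℝ × ℝ :=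
  (cP * (z.2.1 + z.2.2) + cI * (1 - z.2.1 - z.2.2), 0, γ * (1 - z.2.1 - z.2.2))

/-- Control vector field for the protection input. -/
def gPVec (β βh cP : ℝ) (z : ℝ × ℝ × ℝ) : ℝ × ℝ × ℝ :=
  (-(cP * (z.2.1 + z.2.2)), -(β * z.2.1 * (1 - z.2.1 - z.2.2)),
    -(βh * z.2.2 * (1 - z.2.1 - z.2.2)))

/-- Control vector field for the vaccination input. -/
def gVVec (cV : ℝ) (z : ℝ × ℝ × ℝ) : ℝ × ℝ × ℝ := (cV * z.2.1, -z.2.1, z.2.1)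

/-- Lie bracket of two vector fields on `ℝ³`:
`[X, Y](z) = DY(z) X(z) − DX(z) Y(z)`, where `D` is the Fréchet derivative. -/
def lieBr (X Y : ℝ × ℝ × ℝ → ℝ × ℝ × ℝ) (z : ℝ × ℝ × ℝ) : ℝ × ℝ × ℝ :=
  fderiv ℝ Y z (X z) - fderiv ℝ X z (Y z)

section calcs

variable (β βh cP cV : ℝ) (z : ℝ × ℝ × ℝ)

def lproj : (ℝ × ℝ × ℝ) →L[ℝ] ℝ :=
  (ContinuousLinearMap.fst ℝ ℝ ℝ).comp (ContinuousLinearMap.snd ℝ ℝ (ℝ × ℝ))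

def mproj : (ℝ × ℝ × ℝ) →L[ℝ] ℝ :=
  (ContinuousLinearMap.snd ℝ ℝ ℝ).comp (ContinuousLinearMap.snd ℝ ℝ (ℝ × ℝ))

lemma hs' : HasFDerivAt (fun z : ℝ × ℝ × ℝ => z.2.1) lproj z := lproj.hasFDerivAt

lemma hr' : HasFDerivAt (fun z : ℝ × ℝ × ℝ => z.2.2) mproj z := mproj.hasFDerivAt

lemma hgV : HasFDerivAt (gVVec cV)
    ((cV • lproj).prod ((-lproj).prod lproj)) z :=
  HasFDerivAt.prodMk ((hs' z).const_mul cV) (HasFDerivAt.prodMk ((hs' z).neg) (hs' z))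

lemma hw' : HasFDerivAt (fun z : ℝ × ℝ × ℝ => 1 - z.2.1 - z.2.2)
    (0 - lproj - mproj) z :=
  ((hasFDerivAt_const (1:ℝ) z).sub (hs' z)).sub (hr' z)

lemma hgP : HasFDerivAt (gPVec β βh cP)
    ((-(cP • (lproj + mproj))).prod
      ((-((β * z.2.1) • (0 - lproj - mproj) + (1 - z.2.1 - z.2.2) • (β • lproj))).prod
       (-((βh * z.2.2) • (0 - lproj - mproj) + (1 - z.2.1 - z.2.2) • (βh • mproj))))) z :=
  HasFDerivAt.prodMk ((((hs' z).add (hr' z)).const_mul cP).neg)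
    (HasFDerivAt.prodMk ((HasFDerivAt.mul ((hs' z).const_mul β) (hw' z)).neg)
      ((HasFDerivAt.mul ((hr' z).const_mul βh) (hw' z)).neg))

lemma lieBr_eq :
    lieBr (gPVec β βh cP) (gVVec cV) z =
      (-(β * cV * z.2.1 * (1 - z.2.1 - z.2.2)), 0,
        (βh - β) * (z.2.1 * (1 - z.2.1 - z.2.2))) := by
  rw [lieBr, (hgV cV z).fderiv, (hgP β βh cP z).fderiv]
  simp only [gPVec, gVVec, ContinuousLinearMap.prod_apply, ContinuousLinearMap.smul_apply,
    ContinuousLinearMap.neg_apply, ContinuousLinearMap.add_apply, ContinuousLinearMap.sub_apply,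
    ContinuousLinearMap.zero_apply, ContinuousLinearMap.comp_apply,
    ContinuousLinearMap.coe_fst', ContinuousLinearMap.coe_snd',
    smul_eq_mul, Prod.mk_sub_mk]
  refine Prod.ext ?_ (Prod.ext ?_ ?_) <;> simp [lproj, mproj] <;> ring

end calcs

/-- key determinant computation in Proposition 2: under compromised
immunity the vectors `g_V(z)`, `g_P(z)` and `u_P • [g_P, g_V](z)` are linearly
independent. -/


theorem siri_three_vectors_linear_independent
    (β βh γ cP cV cI : ℝ)
    (hβ : 0 < β) (hβhβ : β < βh) (hγ : 0 < γ)
    (hcP : 0 < cP) (hcV : 0 < cV) (hcI : 0 < cI)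
    (z : ℝ × ℝ × ℝ) (hxS : 0 < z.2.1) (hxR : 0 ≤ z.2.2)
    (hxI : 0 < 1 - z.2.1 - z.2.2)
    (uP : ℝ) (huP : 0 < uP) :
    LinearIndependent ℝ
      ![gVVec cV z, gPVec β βh cP z, uP • lieBr (gPVec β βh cP) (gVVec cV) z] := by
  set s := z.2.1 with hsdef
  set r := z.2.2 with hrdef
  set w := 1 - z.2.1 - z.2.2 with hwdef
  rw [Fintype.linearIndependent_iff]
  intro g hg
  rw [Fin.sum_univ_three] at hg
  simp only [Matrix.cons_val_zero, Matrix.cons_val_one, Matrix.head_cons,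
    Matrix.cons_val_two, Matrix.tail_cons, lieBr_eq, gPVec, gVVec,
    Prod.smul_mk, smul_eq_mul, Prod.mk_add_mk, Prod.mk_eq_zero] at hg
  obtain ⟨e1, e2, e3⟩ := hg
  have hw : 0 < w := hxI
  have hs : 0 < s := hxS
  have hβd : 0 < βh - β := by linarith
  -- from e2 : a = -(b β w)
  have hA : g 0 + g 1 * (β * w) = 0 := by
    have h := mul_left_cancel₀ (ne_of_gt hs) (show s * (g 0 + g 1 * (β * w)) = s * 0 by
      rw [mul_zero]; linear_combination -e2)
    linarith
  have hC : g 2 * (uP * ((βh - β) * s)) - g 1 * (β * s + βh * r) = 0 := by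
    have h := mul_left_cancel₀ (ne_of_gt hw)
      (show w * (g 2 * (uP * ((βh - β) * s)) - g 1 * (β * s + βh * r)) = w * 0 by
        rw [mul_zero]; linear_combination e3 - s * hA)
    linarith
  have hK : 0 < β * w * cV * s * (βh - β) + cP * (s + r) * (βh - β)
      + β * cV * w * (β * s + βh * r) := by
    have h1 : 0 < β * w * cV * s * (βh - β) := by positivity
    have h2 : 0 < cP * (s + r) * (βh - β) := by
      have : 0 < s + r := by linarith
      positivity
    have h3 : 0 ≤ β * cV * w * (β * s + βh * r) := by
      have : 0 ≤ β * s + βh * r := by nlinarith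
      positivity
    linarith
  have hb : g 1 = 0 := by
    have hbK : g 1 * (β * w * cV * s * (βh - β) + cP * (s + r) * (βh - β)
        + β * cV * w * (β * s + βh * r)) = 0 := by
      linear_combination (-(βh - β)) * e1 + (cV * s * (βh - β)) * hA
        + (-(β * cV * w)) * hC
    exact (mul_eq_zero.1 hbK).resolve_right (ne_of_gt hK)
  have ha : g 0 = 0 := by
    rw [hb] at hA; linarith
  have hc : g 2 = 0 := by
    rw [hb] at hC
    have := (mul_eq_zero.1 (by linarith : g 2 * (uP * ((βh - β) * s)) = 0))
    rcases this with h | h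
    · exact h
    · exfalso; have : 0 < uP * ((βh - β) * s) := by positivity
      linarith
  intro i
  fin_cases i <;> simpa [ha, hb, hc]
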